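/- In the crossword multigraph of a crossword puzzle, between two nonzero floor sets there is at most one '+' edge and at most one '−' edge, and a zero floor set is joined to any floor set by at most one '0' edge. -/
import Mathlib


/-- Edge labels of a bit multigraph: `+`, `-`, `0`. -/
inductive Label
  | plus
  | minus
  | zero
  deriving DecidableEq

/-- A (balanced) bipartite indexed tricolored multigraph: vertex indices in each
part are rationals, edges are triples (index in A, index in B, label). -/
structure BitMG where
  A : Finset ℚ
  B : Finset ℚ
  E : Multiset (ℚ × ℚ × Label)

/-- Degree of a vertex of part A: number of incident edges. -/
def degA (G : BitMG) (x : ℚ) : ℕ := (G.E.filter (fun e => e.1 = x)).card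

/-- Degree of a vertex of part B: number of incident edges. -/
def degB (G : BitMG) (y : ℚ) : ℕ := (G.E.filter (fun e => e.2.1 = y)).card

/-- Given that the edge `(a,b,L)` was voided and a vertex incident to it was split
into `v0` (lower) and `v1` (upper), `splitTarget L M v0 v1 other otherRemoved`
tells which of the two split vertices an edge labeled `M`, whose other endpoint is
`other` (the other endpoint of the removed edge being `otherRemoved`), is
reassigned to, following the voiding rules of the paper. -/
def splitTarget (L M : Label) (v0 v1 : ℚ) (other otherRemoved : ℚ) : ℚ :=
  if M = L then
    match L with
    | Label.minus => if otherRemoved < other then v0 else v1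
    | _ => if other < otherRemoved then v0 else v1
  else
    match M with
    | Label.plus => v1
    | Label.minus => v0
    | Label.zero => if L = Label.plus then v0 else v1

/-- The voiding procedure: `Voiding G G'` holds when `G'` is obtained from `G` by
removing one edge `(a,b,L)`, splitting `a` into fresh vertices `a0 < a1` and `b`
into `b0 < b1` (keeping integer parts and relative order of indices), and
reassigning the remaining incident edges according to the rules of the paper. -/
def Voiding (G G' : BitMG) : Prop :=
  ∃ a b L, (a, b, L) ∈ G.E ∧ a ∈ G.A ∧ b ∈ G.B ∧
    ∃ a0 a1 b0 b1 : ℚ,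
      a0 ∉ G.A ∧ a1 ∉ G.A ∧ b0 ∉ G.B ∧ b1 ∉ G.B ∧
      a0 < a1 ∧ b0 < b1 ∧
      ⌊a0⌋ = ⌊a⌋ ∧ ⌊a1⌋ = ⌊a⌋ ∧ ⌊b0⌋ = ⌊b⌋ ∧ ⌊b1⌋ = ⌊b⌋ ∧
      (∀ x ∈ G.A, x ≠ a → (x < a → x < a0) ∧ (a < x → a1 < x)) ∧
      (∀ y ∈ G.B, y ≠ b → (y < b → y < b0) ∧ (b < y → b1 < y)) ∧
      G'.A = insert a0 (insert a1 (G.A.erase a)) ∧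
      G'.B = insert b0 (insert b1 (G.B.erase b)) ∧
      G'.E = (G.E.erase (a, b, L)).map (fun e =>
        ((if e.1 = a then splitTarget L e.2.2 a0 a1 e.2.1 b else e.1),
         (if e.2.1 = b then splitTarget L e.2.2 b0 b1 e.1 a else e.2.1),
         e.2.2))

/-- `VoidedFrom v G G'` : `G'` is obtained from `G` by `v` voiding operations. -/
def VoidedFrom : ℕ → BitMG → BitMG → Prop
  | 0, G, G' => G' = G
  | v + 1, G, G' => ∃ H, VoidedFrom v G H ∧ Voiding H G'

/-- The crossword multigraph of the unvoided (2n+1)×(2n+1) grid: each part has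
vertices indexed 0,1,…,n; nonzero vertices are pairwise joined by one `+` and one
`-` edge, and zero vertices are joined to every vertex of the other part by a `0`
edge (with a single 0–0 edge). -/
def unvoidedCMG (n : ℕ) : BitMG where
  A := (Finset.Icc 0 n).image (fun i : ℕ => (i : ℚ))
  B := (Finset.Icc 0 n).image (fun i : ℕ => (i : ℚ))
  E := ((Finset.Icc 1 n ×ˢ Finset.Icc 1 n).val.map
          (fun p => ((p.1 : ℚ), (p.2 : ℚ), Label.plus)))
      + ((Finset.Icc 1 n ×ˢ Finset.Icc 1 n).val.map
          (fun p => ((p.1 : ℚ), (p.2 : ℚ), Label.minus)))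
      + ((Finset.Icc 0 n).val.map (fun b => ((0 : ℚ), (b : ℚ), Label.zero)))
      + ((Finset.Icc 1 n).val.map (fun a => ((a : ℚ), (0 : ℚ), Label.zero)))


section Helpers

lemma card_filter_le_one' {α : Type*} {s : Multiset α} (hs : s.Nodup)
    (p : α → Prop) [DecidablePred p]
    (h : ∀ x ∈ s, ∀ y ∈ s, p x → p y → x = y) : (s.filter p).card ≤ 1 := by
  have hn : (s.filter p).Nodup := hs.filter p
  have : (⟨s.filter p, hn⟩ : Finset α).card ≤ 1 := by
    rw [Finset.card_le_one]
    intro a ha b hb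
    have ha' : a ∈ s.filter p := ha
    have hb' : b ∈ s.filter p := hb
    exact h a (Multiset.mem_of_mem_filter ha') b (Multiset.mem_of_mem_filter hb')
      (Multiset.of_mem_filter ha') (Multiset.of_mem_filter hb')
  exact this

lemma splitTarget_mem (L M : Label) (v0 v1 o r : ℚ) :
    splitTarget L M v0 v1 o r = v0 ∨ splitTarget L M v0 v1 o r = v1 := by
  rcases L <;> rcases M <;> unfold splitTarget <;> split_ifs <;> simp_all

lemma voiding_cnt_le {G G' : BitMG} (h : Voiding G G') (k m : ℤ) (L : Label) :
    (G'.E.filter (fun e => ⌊e.1⌋ = k ∧ ⌊e.2.1⌋ = m ∧ e.2.2 = L)).card ≤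
    (G.E.filter (fun e => ⌊e.1⌋ = k ∧ ⌊e.2.1⌋ = m ∧ e.2.2 = L)).card := by
  obtain ⟨a, b, L0, hmem, -, -, a0, a1, b0, b1, -, -, -, -, -, -,
    hfa0, hfa1, hfb0, hfb1, -, -, -, -, hE⟩ := h
  rw [hE, Multiset.filter_map, Multiset.card_map]
  have key : ∀ e ∈ G.E.erase (a, b, L0),
      ((⌊(if e.1 = a then splitTarget L0 e.2.2 a0 a1 e.2.1 b else e.1)⌋ = k ∧
        ⌊(if e.2.1 = b then splitTarget L0 e.2.2 b0 b1 e.1 a else e.2.1)⌋ = m ∧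
        e.2.2 = L) ↔ (⌊e.1⌋ = k ∧ ⌊e.2.1⌋ = m ∧ e.2.2 = L)) := by
    intro e _
    have h1 : ⌊(if e.1 = a then splitTarget L0 e.2.2 a0 a1 e.2.1 b else e.1)⌋ = ⌊e.1⌋ := by
      split_ifs with hc
      · rcases splitTarget_mem L0 e.2.2 a0 a1 e.2.1 b with h' | h' <;>
          rw [h'] <;> rw [hc] <;> [exact hfa0; exact hfa1]
      · rfl
    have h2 : ⌊(if e.2.1 = b then splitTarget L0 e.2.2 b0 b1 e.1 a else e.2.1)⌋ = ⌊e.2.1⌋ := by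
      split_ifs with hc
      · rcases splitTarget_mem L0 e.2.2 b0 b1 e.1 a with h' | h' <;>
          rw [h'] <;> rw [hc] <;> [exact hfb0; exact hfb1]
      · rfl
    rw [h1, h2]
  have h1 := Multiset.filter_congr (fun e he => by
    simpa [Function.comp] using key e he :
    ∀ e ∈ G.E.erase (a, b, L0),
      (((fun e => ⌊e.1⌋ = k ∧ ⌊e.2.1⌋ = m ∧ e.2.2 = L) ∘ fun e =>
          ((if e.1 = a then splitTarget L0 e.2.2 a0 a1 e.2.1 b else e.1),
           (if e.2.1 = b then splitTarget L0 e.2.2 b0 b1 e.1 a else e.2.1),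
           e.2.2)) e ↔
        (⌊e.1⌋ = k ∧ ⌊e.2.1⌋ = m ∧ e.2.2 = L)))
  rw [h1]
  exact Multiset.card_le_card (Multiset.filter_le_filter _ (Multiset.erase_le _ G.E))

universe u
lemma bind_pure_map {α β : Type u} (s : Multiset α) (f : α → β) :
    (do let a ← s; pure (f a) : Multiset β) = s.map f := by
  simp [Bind.bind, pure, Multiset.bind_singleton]

lemma voidedFrom_cnt_le {U G : BitMG} {v : ℕ} (h : VoidedFrom v U G) (k m : ℤ) (L : Label) :
    (G.E.filter (fun e => ⌊e.1⌋ = k ∧ ⌊e.2.1⌋ = m ∧ e.2.2 = L)).card ≤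
    (U.E.filter (fun e => ⌊e.1⌋ = k ∧ ⌊e.2.1⌋ = m ∧ e.2.2 = L)).card := by
  induction v generalizing G with
  | zero => rw [show G = U from h]
  | succ v ih =>
    obtain ⟨H, h1, h2⟩ := h
    exact (voiding_cnt_le h2 k m L).trans (ih h1)

lemma filter_map_card_le_one {α β : Type*} (s : Multiset α) (hs : s.Nodup) (f : α → β)
    (p : β → Prop) [DecidablePred p]
    (h : ∀ x ∈ s, ∀ y ∈ s, p (f x) → p (f y) → x = y) :
    ((s.map f).filter p).card ≤ 1 := by
  rw [Multiset.filter_map, Multiset.card_map]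
  exact card_filter_le_one' hs _ h

lemma filter_map_card_zero {α β : Type*} (s : Multiset α) (f : α → β)
    (p : β → Prop) [DecidablePred p] (h : ∀ x ∈ s, ¬ p (f x)) :
    ((s.map f).filter p).card = 0 := by
  rw [Multiset.filter_map, Multiset.card_map, Multiset.card_eq_zero,
    Multiset.filter_eq_nil]
  exact h

lemma unvoided_bound (n : ℕ) (k m : ℤ) (L : Label)
    (hL : L = Label.zero → (k = 0 ∨ m = 0)) :
    ((unvoidedCMG n).E.filter
      (fun e => ⌊e.1⌋ = k ∧ ⌊e.2.1⌋ = m ∧ e.2.2 = L)).card ≤ 1 := by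
  simp only [unvoidedCMG, bind_pure_map, Multiset.map_map, Function.comp, Multiset.filter_add, Multiset.card_add]
  rcases L with _ | _ | _
  · have c2 := filter_map_card_zero (Finset.Icc 1 n ×ˢ Finset.Icc 1 n).val
      (fun q => ((q.1 : ℚ), (q.2 : ℚ), Label.minus))
      (fun e => ⌊e.1⌋ = k ∧ ⌊e.2.1⌋ = m ∧ e.2.2 = Label.plus) (by intro x _; simp)
    have c3 := filter_map_card_zero (Finset.Icc 0 n).val
      (fun b => ((0 : ℚ), (b : ℚ), Label.zero))
      (fun e => ⌊e.1⌋ = k ∧ ⌊e.2.1⌋ = m ∧ e.2.2 = Label.plus) (by intro x _; simp)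
    have c4 := filter_map_card_zero (Finset.Icc 1 n).val
      (fun a => ((a : ℚ), (0 : ℚ), Label.zero))
      (fun e => ⌊e.1⌋ = k ∧ ⌊e.2.1⌋ = m ∧ e.2.2 = Label.plus) (by intro x _; simp)
    have c1 := filter_map_card_le_one (Finset.Icc 1 n ×ˢ Finset.Icc 1 n).val
      (Finset.nodup _)
      (fun q => ((q.1 : ℚ), (q.2 : ℚ), Label.plus))
      (fun e => ⌊e.1⌋ = k ∧ ⌊e.2.1⌋ = m ∧ e.2.2 = Label.plus) (by
        intro x _ y _ hx hy
        obtain ⟨hx1, hx2, -⟩ := hx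
        obtain ⟨hy1, hy2, -⟩ := hy
        simp only [Int.floor_natCast] at hx1 hx2 hy1 hy2
        refine Prod.ext ?_ ?_ <;> exact_mod_cast (by omega : _))
    omega
  · have c1 := filter_map_card_zero (Finset.Icc 1 n ×ˢ Finset.Icc 1 n).val
      (fun q => ((q.1 : ℚ), (q.2 : ℚ), Label.plus))
      (fun e => ⌊e.1⌋ = k ∧ ⌊e.2.1⌋ = m ∧ e.2.2 = Label.minus) (by intro x _; simp)
    have c3 := filter_map_card_zero (Finset.Icc 0 n).val
      (fun b => ((0 : ℚ), (b : ℚ), Label.zero))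
      (fun e => ⌊e.1⌋ = k ∧ ⌊e.2.1⌋ = m ∧ e.2.2 = Label.minus) (by intro x _; simp)
    have c4 := filter_map_card_zero (Finset.Icc 1 n).val
      (fun a => ((a : ℚ), (0 : ℚ), Label.zero))
      (fun e => ⌊e.1⌋ = k ∧ ⌊e.2.1⌋ = m ∧ e.2.2 = Label.minus) (by intro x _; simp)
    have c2 := filter_map_card_le_one (Finset.Icc 1 n ×ˢ Finset.Icc 1 n).val
      (Finset.nodup _)
      (fun q => ((q.1 : ℚ), (q.2 : ℚ), Label.minus))
      (fun e => ⌊e.1⌋ = k ∧ ⌊e.2.1⌋ = m ∧ e.2.2 = Label.minus) (by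
        intro x _ y _ hx hy
        obtain ⟨hx1, hx2, -⟩ := hx
        obtain ⟨hy1, hy2, -⟩ := hy
        simp only [Int.floor_natCast] at hx1 hx2 hy1 hy2
        refine Prod.ext ?_ ?_ <;> exact_mod_cast (by omega : _))
    omega
  · have c1 := filter_map_card_zero (Finset.Icc 1 n ×ˢ Finset.Icc 1 n).val
      (fun q => ((q.1 : ℚ), (q.2 : ℚ), Label.plus))
      (fun e => ⌊e.1⌋ = k ∧ ⌊e.2.1⌋ = m ∧ e.2.2 = Label.zero) (by intro x _; simp)
    have c2 := filter_map_card_zero (Finset.Icc 1 n ×ˢ Finset.Icc 1 n).val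
      (fun q => ((q.1 : ℚ), (q.2 : ℚ), Label.minus))
      (fun e => ⌊e.1⌋ = k ∧ ⌊e.2.1⌋ = m ∧ e.2.2 = Label.zero) (by intro x _; simp)
    by_cases hk : k = 0
    · have c4 := filter_map_card_zero (Finset.Icc 1 n).val
        (fun a => ((a : ℚ), (0 : ℚ), Label.zero))
        (fun e => ⌊e.1⌋ = k ∧ ⌊e.2.1⌋ = m ∧ e.2.2 = Label.zero) (by
          intro x hx
          simp only [Finset.mem_val, Finset.mem_Icc] at hx
          simp only [Int.floor_natCast, hk, not_and]
          intro h
          omega)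
      have c3 := filter_map_card_le_one (Finset.Icc 0 n).val (Finset.nodup _)
        (fun b => ((0 : ℚ), (b : ℚ), Label.zero))
        (fun e => ⌊e.1⌋ = k ∧ ⌊e.2.1⌋ = m ∧ e.2.2 = Label.zero) (by
          intro x _ y _ hx hy
          obtain ⟨-, hx2, -⟩ := hx
          obtain ⟨-, hy2, -⟩ := hy
          simp only [Int.floor_natCast] at hx2 hy2
          exact_mod_cast (by omega : (x : ℤ) = y))
      omega
    · have hm : m = 0 := (hL rfl).resolve_left hk
      have c3 := filter_map_card_zero (Finset.Icc 0 n).val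
        (fun b => ((0 : ℚ), (b : ℚ), Label.zero))
        (fun e => ⌊e.1⌋ = k ∧ ⌊e.2.1⌋ = m ∧ e.2.2 = Label.zero) (by
          intro x _
          simp only [not_and]
          intro h
          exfalso
          apply hk
          simpa using h.symm)
      have c4 := filter_map_card_le_one (Finset.Icc 1 n).val (Finset.nodup _)
        (fun a => ((a : ℚ), (0 : ℚ), Label.zero))
        (fun e => ⌊e.1⌋ = k ∧ ⌊e.2.1⌋ = m ∧ e.2.2 = Label.zero) (by
          intro x _ y _ hx hy
          obtain ⟨hx1, -, -⟩ := hx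
          obtain ⟨hy1, -, -⟩ := hy
          simp only [Int.floor_natCast] at hx1 hy1
          exact_mod_cast (by omega : (x : ℤ) = y))
      omega

/-- No doubles: in the crossword multigraph of a crossword puzzle, between two
nonzero floor sets there is at most one '+' edge and at most one '−' edge, and a
zero floor set is joined to any floor set by at most one '0' edge. -/
theorem no_doubles (n : ℕ) (G : BitMG)
    (hG : ∃ v, VoidedFrom v (unvoidedCMG n) G) :
    (∀ k m : ℤ, k ≠ 0 → m ≠ 0 →
      (G.E.filter (fun e => ⌊e.1⌋ = k ∧ ⌊e.2.1⌋ = m ∧ e.2.2 = Label.plus)).card ≤ 1 ∧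
      (G.E.filter (fun e => ⌊e.1⌋ = k ∧ ⌊e.2.1⌋ = m ∧ e.2.2 = Label.minus)).card ≤ 1) ∧
    (∀ k m : ℤ, k = 0 ∨ m = 0 →
      (G.E.filter (fun e => ⌊e.1⌋ = k ∧ ⌊e.2.1⌋ = m ∧ e.2.2 = Label.zero)).card ≤ 1) := by
  obtain ⟨v, hv⟩ := hG
  constructor
  · intro k m _ _
    exact ⟨(voidedFrom_cnt_le hv k m Label.plus).trans
        (unvoided_bound n k m Label.plus (by simp)),
      (voidedFrom_cnt_le hv k m Label.minus).trans
        (unvoided_bound n k m Label.minus (by simp))⟩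
  · intro k m h
    exact (voidedFrom_cnt_le hv k m Label.zero).trans
      (unvoided_bound n k m Label.zero (fun _ => h))
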